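/- Let 0 < p < q be coprime, σ the cone in ℝ² generated by (1,0) and (p,q), and (c₁,…,c_t) the Hirzebruch–Jung continued fraction of q/p. Then the minimal generating set of the semigroup σ̌ ∩ ℤ² has exactly t + 2 elements. -/

import Mathlib

/-- The value of a Hirzebruch–Jung continued fraction
`a₁ − 1/(a₂ − 1/(⋯ − 1/aₙ))` with integer entries, as a rational number. -/
def hjVal : List ℤ → ℚ
  | [] => 0
  | [a] => (a : ℚ)
  | a :: b :: l => (a : ℚ) - 1 / hjVal (b :: l)

/-- `m` is a nonnegative integer combination of elements of `G`. -/
def genBy (G : Finset (ℤ × ℤ)) (m : ℤ × ℤ) : Prop :=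
  ∃ f : (ℤ × ℤ) → ℕ, m = ∑ g ∈ G, (f g : ℤ) • g

namespace HJaux


def SS (p q : ℤ) : Set (ℤ × ℤ) := {m | 0 ≤ m.1 ∧ 0 ≤ p * m.1 + q * m.2}

lemma zero_mem_SS (p q : ℤ) : (0 : ℤ × ℤ) ∈ SS p q := by simp [SS]

lemma add_mem_SS {p q : ℤ} {u v : ℤ × ℤ} (hu : u ∈ SS p q) (hv : v ∈ SS p q) :
    u + v ∈ SS p q := by
  obtain ⟨h1, h2⟩ := hu; obtain ⟨h3, h4⟩ := hv
  refine ⟨?_, ?_⟩ <;> simp only [Prod.fst_add, Prod.snd_add] <;> nlinarith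

def Irr (p q : ℤ) : Set (ℤ × ℤ) :=
  {m | m ∈ SS p q ∧ m ≠ 0 ∧
    ∀ u v : ℤ × ℤ, u ∈ SS p q → v ∈ SS p q → u ≠ 0 → v ≠ 0 → m ≠ u + v}

lemma genBy_iff {G : Finset (ℤ × ℤ)} {m : ℤ × ℤ} :
    genBy G m ↔ m ∈ AddSubmonoid.closure (G : Set (ℤ × ℤ)) := by
  constructor
  · rintro ⟨f, rfl⟩
    refine AddSubmonoid.sum_mem _ (fun g hg => ?_)
    rw [show ((f g : ℕ) : ℤ) • g = (f g) • g from natCast_zsmul g (f g)]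
    exact nsmul_mem (AddSubmonoid.subset_closure hg) _
  · intro hm
    induction hm using AddSubmonoid.closure_induction with
    | mem x hx =>
      refine ⟨fun y => if y = x then 1 else 0, ?_⟩
      rw [Finset.sum_eq_single x]
      · simp
      · intro b _ hb; simp [hb]
      · intro h; exact absurd hx h
    | zero => exact ⟨fun _ => 0, by simp⟩
    | add x y hx hy ihx ihy =>
      obtain ⟨f, rfl⟩ := ihx; obtain ⟨g, rfl⟩ := ihy
      refine ⟨fun z => f z + g z, ?_⟩
      rw [← Finset.sum_add_distrib]
      congr 1; funext z; push_cast; rw [add_smul]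

/-- the additive "norm" used for induction -/
def NN (p q : ℤ) (m : ℤ × ℤ) : ℤ := m.1 + (p * m.1 + q * m.2)

lemma NN_pos {p q : ℤ} (hp : 0 < p) (hq : 0 < q) {m : ℤ × ℤ} (hm : m ∈ SS p q)
    (hm0 : m ≠ 0) : 0 < NN p q m := by
  obtain ⟨h1, h2⟩ := hm
  rcases lt_or_eq_of_le h1 with h | h
  · unfold NN; nlinarith
  · have hx : m.1 = 0 := h.symm
    have hm2 : m.2 ≠ 0 := fun h2' => hm0 (Prod.ext_iff.mpr ⟨hx, h2'⟩)
    have hq2 : 0 ≤ q * m.2 := by nlinarith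
    have hpos : 0 < m.2 := by
      rcases lt_trichotomy m.2 0 with h' | h' | h'
      · nlinarith
      · exact absurd h' hm2
      · exact h'
    unfold NN; rw [hx]; nlinarith

lemma SS_subset_closure_Irr {p q : ℤ} (hp : 0 < p) (hq : 0 < q) :
    SS p q ⊆ AddSubmonoid.closure (Irr p q) := by
  suffices h : ∀ n : ℕ, ∀ m, m ∈ SS p q → (NN p q m).toNat = n →
      m ∈ AddSubmonoid.closure (Irr p q) by
    intro m hm; exact h _ m hm rfl
  intro n
  induction n using Nat.strong_induction_on with
  | _ n ih =>
    intro m hm hn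
    by_cases hm0 : m = 0
    · subst hm0; exact AddSubmonoid.zero_mem _
    have hN := NN_pos hp hq hm hm0
    by_cases hirr : m ∈ Irr p q
    · exact AddSubmonoid.subset_closure hirr
    · have : ∃ u v : ℤ × ℤ, u ∈ SS p q ∧ v ∈ SS p q ∧ u ≠ 0 ∧ v ≠ 0 ∧ m = u + v := by
        by_contra hc
        push_neg at hc
        exact hirr ⟨hm, hm0, fun u v hu hv hu0 hv0 => hc u v hu hv hu0 hv0⟩
      obtain ⟨u, v, hu, hv, hu0, hv0, rfl⟩ := this
      have hNu := NN_pos hp hq hu hu0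
      have hNv := NN_pos hp hq hv hv0
      have hadd : NN p q (u + v) = NN p q u + NN p q v := by
        unfold NN; simp only [Prod.fst_add, Prod.snd_add]; ring
      have h1 : (NN p q u).toNat < n := by omega
      have h2 : (NN p q v).toNat < n := by omega
      exact AddSubmonoid.add_mem _ (ih _ h1 u hu rfl) (ih _ h2 v hv rfl)

lemma sum_mem_SS {p q : ℤ} {G : Finset (ℤ × ℤ)} (hG : (G : Set (ℤ × ℤ)) ⊆ SS p q)
    (f : (ℤ × ℤ) → ℕ) : (∑ g ∈ G, (f g : ℤ) • g) ∈ SS p q := by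
  classical
  induction G using Finset.induction_on with
  | empty => simpa using zero_mem_SS p q
  | @insert a s hx ih =>
    rw [Finset.sum_insert hx]
    have ha : a ∈ SS p q := hG (by simp)
    have hs : (s : Set (ℤ × ℤ)) ⊆ SS p q := fun x hx' => hG (by simp [hx'])
    refine add_mem_SS ?_ (ih hs)
    have : ∀ n : ℕ, (n : ℤ) • a ∈ SS p q := by
      intro n
      induction n with
      | zero => simpa using zero_mem_SS p q
      | succ k ihk =>
        have : ((k+1 : ℕ) : ℤ) • a = (k : ℤ) • a + a := by push_cast; rw [add_smul]; simp
        rw [this]; exact add_mem_SS ihk ha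
    exact this _

lemma Irr_subset_G {p q : ℤ} (hp : 0 < p) (hq : 0 < q) {G : Finset (ℤ × ℤ)}
    (hGS : (G : Set (ℤ × ℤ)) ⊆ SS p q)
    (hgen : ∀ m ∈ SS p q, genBy G m) : Irr p q ⊆ (G : Set (ℤ × ℤ)) := by
  classical
  intro g hg
  obtain ⟨hgS, hg0, hirr⟩ := hg
  obtain ⟨f, hf⟩ := hgen g hgS
  -- find x ∈ G with f x ≠ 0 and x ≠ 0
  have hex : ∃ x ∈ G, f x ≠ 0 ∧ x ≠ 0 := by
    by_contra hc
    push_neg at hc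
    apply hg0
    rw [hf]
    apply Finset.sum_eq_zero
    intro x hx
    by_cases hfx : f x = 0
    · simp [hfx]
    · have := hc x hx hfx; simp [this]
  obtain ⟨x, hxG, hfx, hx0⟩ := hex
  set f' : (ℤ × ℤ) → ℕ := Function.update f x (f x - 1) with hf'
  have hsplit : g = x + ∑ y ∈ G, (f' y : ℤ) • y := by
    rw [hf, ← Finset.add_sum_erase _ _ hxG, ← Finset.add_sum_erase _ (fun y => (f' y : ℤ) • y) hxG]
    have h1 : ∑ y ∈ G.erase x, (f' y : ℤ) • y = ∑ y ∈ G.erase x, (f y : ℤ) • y := by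
      apply Finset.sum_congr rfl
      intro y hy
      have : y ≠ x := Finset.ne_of_mem_erase hy
      simp [hf', Function.update_of_ne this]
    rw [h1, ← add_assoc]
    congr 1
    have : f' x = f x - 1 := by simp [hf']
    rw [this]
    have hfx1 : 1 ≤ f x := Nat.one_le_iff_ne_zero.mpr hfx
    have : ((f x : ℤ)) = ((f x - 1 : ℕ) : ℤ) + 1 := by omega
    rw [this, add_smul, one_smul]; ring
  set r := ∑ y ∈ G, (f' y : ℤ) • y with hr
  have hrS : r ∈ SS p q := sum_mem_SS hGS f'
  by_cases hr0 : r = 0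
  · rw [hr0, add_zero] at hsplit; rw [hsplit]; exact hxG
  · exact absurd hsplit (hirr x r (hGS hxG) hrS hx0 hr0)

lemma G_eq_Irr {p q : ℤ} (hp : 0 < p) (hq : 0 < q) {G : Finset (ℤ × ℤ)}
    (hGS : (G : Set (ℤ × ℤ)) ⊆ SS p q)
    (hgen : ∀ m ∈ SS p q, genBy G m)
    (hmin : ∀ G' : Finset (ℤ × ℤ), G' ⊂ G → ∃ m ∈ SS p q, ¬ genBy G' m) :
    (G : Set (ℤ × ℤ)) = Irr p q := by
  classical
  have hIG := Irr_subset_G hp hq hGS hgen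
  apply Set.Subset.antisymm _ hIG
  intro g hgG
  by_contra hgI
  obtain ⟨m, hmS, hmgen⟩ := hmin (G.erase g) (Finset.erase_ssubset hgG)
  apply hmgen
  rw [genBy_iff]
  have h1 : Irr p q ⊆ ((G.erase g : Finset (ℤ × ℤ)) : Set (ℤ × ℤ)) := by
    intro x hx
    have hxG := hIG hx
    simp only [Finset.coe_erase, Set.mem_diff, Set.mem_singleton_iff]
    exact ⟨hxG, fun h => hgI (h ▸ hx)⟩
  exact AddSubmonoid.closure_mono h1 (SS_subset_closure_Irr hp hq hmS)


lemma mk_mem_SS {p q x y : ℤ} (h1 : 0 ≤ x) (h2 : 0 ≤ p * x + q * y) :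
    ((x, y) : ℤ × ℤ) ∈ SS p q := ⟨h1, h2⟩

lemma mem_SS_iff {p q : ℤ} {m : ℤ × ℤ} :
    m ∈ SS p q ↔ 0 ≤ m.1 ∧ 0 ≤ p * m.1 + q * m.2 := Iff.rfl

lemma ne_zero_left {x y : ℤ} (h : x ≠ 0) : ((x, y) : ℤ × ℤ) ≠ 0 :=
  fun hh => h (congrArg Prod.fst hh)

lemma ne_zero_right {x y : ℤ} (h : y ≠ 0) : ((x, y) : ℤ × ℤ) ≠ 0 :=
  fun hh => h (congrArg Prod.snd hh)

lemma eq_zero_iff {m : ℤ × ℤ} : m = 0 ↔ m.1 = 0 ∧ m.2 = 0 := by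
  rw [Prod.ext_iff]; exact Iff.rfl

lemma nonneg_factor {q y : ℤ} (hq : 0 < q) (h : 0 ≤ q * y) : 0 ≤ y :=
  le_of_mul_le_mul_left (by simpa using h) hq

lemma eq_add_iff {m u v : ℤ × ℤ} : m = u + v ↔ m.1 = u.1 + v.1 ∧ m.2 = u.2 + v.2 := by
  rw [Prod.ext_iff]; exact Iff.rfl

lemma hjVal_gt_one : ∀ c : List ℤ, c ≠ [] → (∀ a ∈ c, 2 ≤ a) → 1 < hjVal c
  | [], h, _ => absurd rfl h
  | [a], _, h2 => by
      have h : 2 ≤ a := h2 a (by simp)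
      have : (2 : ℚ) ≤ (a : ℚ) := by exact_mod_cast h
      show (1 : ℚ) < (a : ℚ)
      linarith
  | a :: b :: l, _, h2 => by
      have ih : 1 < hjVal (b :: l) := hjVal_gt_one (b :: l) (by simp)
        (fun x hx => h2 x (by simp at hx ⊢; tauto))
      have ha : 2 ≤ (a : ℚ) := by exact_mod_cast h2 a (by simp)
      have h0 : 0 < hjVal (b :: l) := lt_trans one_pos ih
      have h3 : 1 / hjVal (b :: l) < 1 := by rw [div_lt_one h0]; exact ih
      have hpos : 0 < 1 / hjVal (b :: l) := by positivity
      show (1 : ℚ) < (a : ℚ) - 1 / hjVal (b :: l)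
      linarith

lemma zero_one_mem_SS {p q : ℤ} (hq : 0 < q) : ((0:ℤ),(1:ℤ)) ∈ SS p q :=
  mk_mem_SS le_rfl (by nlinarith)

lemma zero_one_mem_Irr {p q : ℤ} (hq : 0 < q) : ((0:ℤ),(1:ℤ)) ∈ Irr p q := by
  refine ⟨zero_one_mem_SS hq, ne_zero_right one_ne_zero, ?_⟩
  rintro u v ⟨hu1, hu2⟩ ⟨hv1, hv2⟩ hu0 hv0 h
  rw [eq_add_iff] at h
  obtain ⟨e1, e2⟩ := h
  simp only at e1 e2
  have hu1' : u.1 = 0 := by omega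
  have hv1' : v.1 = 0 := by omega
  have hu2' : 0 ≤ u.2 := by
    apply nonneg_factor hq; rw [hu1'] at hu2; linarith
  have hv2' : 0 ≤ v.2 := by
    apply nonneg_factor hq; rw [hv1'] at hv2; linarith
  simp only [ne_eq, eq_zero_iff] at hu0 hv0
  omega

/-- reducibility transfer to the lower half, assuming u.2 ≥ 1 -/
lemma redux_aux {p q : ℤ} (hp : 0 < p) (hpq : p < q) {m u v : ℤ × ℤ}
    (hm2 : m.2 ≤ 0) (hu : u ∈ SS p q) (hv : v ∈ SS p q) (hu0 : u ≠ 0) (hv0 : v ≠ 0)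
    (hm : m = u + v) (hu2 : 1 ≤ u.2) :
    ∃ u' v', u' ∈ SS p q ∧ v' ∈ SS p q ∧ u'.2 ≤ 0 ∧ v'.2 ≤ 0 ∧ u' ≠ 0 ∧ v' ≠ 0 ∧
      m = u' + v' := by
  have hq : 0 < q := hp.trans hpq
  obtain ⟨hu1, huc⟩ := hu
  obtain ⟨hv1, hvc⟩ := hv
  rw [eq_add_iff] at hm
  obtain ⟨hm1, hm2'⟩ := hm
  by_cases hv1' : v.1 = 0
  · exfalso
    have hv2 : 0 ≤ v.2 := by
      apply nonneg_factor hq; rw [hv1'] at hvc; linarith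
    simp only [ne_eq, eq_zero_iff] at hv0
    omega
  by_cases hu1' : u.1 = 0
  · -- use (1,0) + (m.1 - 1, m.2)
    have hqu : q * 1 ≤ q * u.2 := by nlinarith
    have hqle : q ≤ p * m.1 + q * m.2 := by
      have e : p * m.1 + q * m.2 = (p * v.1 + q * v.2) + q * u.2 := by
        rw [hm1, hm2', hu1']; ring
      linarith
    have hqm2 : q * m.2 ≤ 0 := by nlinarith
    have hm1ge : 2 ≤ m.1 := by nlinarith
    refine ⟨(1, 0), (m.1 - 1, m.2), mk_mem_SS one_pos.le (by nlinarith),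
      mk_mem_SS (by omega) (by nlinarith), le_rfl, hm2, ne_zero_left one_ne_zero,
      ne_zero_left (by omega), ?_⟩
    rw [eq_add_iff]; constructor <;> simp <;> omega
  · -- u.1 ≥ 1, v.1 ≥ 1 : use (u.1, 0) + (v.1, m.2)
    have hv1ge : 1 ≤ v.1 := by omega
    have hu1ge : 1 ≤ u.1 := by omega
    have hqu : q ≤ q * u.2 := by nlinarith
    refine ⟨(u.1, 0), (v.1, m.2), mk_mem_SS hu1 (by nlinarith),
      mk_mem_SS hv1 ?_, le_rfl, hm2, ne_zero_left (by omega), ne_zero_left (by omega), ?_⟩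
    · have e : p * v.1 + q * m.2 = (p * v.1 + q * v.2) + q * u.2 := by rw [hm2']; ring
      linarith
    · rw [eq_add_iff]; constructor <;> simp <;> omega

lemma redux {p q : ℤ} (hp : 0 < p) (hpq : p < q) {m u v : ℤ × ℤ}
    (hm2 : m.2 ≤ 0) (hu : u ∈ SS p q) (hv : v ∈ SS p q) (hu0 : u ≠ 0) (hv0 : v ≠ 0)
    (hm : m = u + v) :
    ∃ u' v', u' ∈ SS p q ∧ v' ∈ SS p q ∧ u'.2 ≤ 0 ∧ v'.2 ≤ 0 ∧ u' ≠ 0 ∧ v' ≠ 0 ∧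
      m = u' + v' := by
  by_cases h1 : 1 ≤ u.2
  · exact redux_aux hp hpq hm2 hu hv hu0 hv0 hm h1
  by_cases h2 : 1 ≤ v.2
  · exact redux_aux hp hpq hm2 hv hu hv0 hu0 (by rw [hm, add_comm]) h2
  · exact ⟨u, v, hu, hv, by omega, by omega, hu0, hv0, hm⟩

lemma fwd_mem {p q a : ℤ} (hp : 0 < p) (hq : 0 < q) {m : ℤ × ℤ}
    (hm : m ∈ SS (a*p - q) p) :
    ((a * m.1 + m.2, -m.1) : ℤ × ℤ) ∈ SS p q := by
  obtain ⟨h1, h2⟩ := hm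
  refine mk_mem_SS ?_ ?_
  · have key : p * 0 ≤ p * (a * m.1 + m.2) := by nlinarith
    exact le_of_mul_le_mul_left key hp
  · nlinarith

lemma bwd_mem {p q a : ℤ} {m : ℤ × ℤ} (hm : m ∈ SS p q) (h2 : m.2 ≤ 0) :
    ((-m.2, m.1 + a * m.2) : ℤ × ℤ) ∈ SS (a*p - q) p := by
  obtain ⟨h1, hc⟩ := hm
  refine mk_mem_SS (by omega) (by nlinarith)

lemma fwd_ne_zero {a : ℤ} {m : ℤ × ℤ} (hm : m ≠ 0) :
    ((a * m.1 + m.2, -m.1) : ℤ × ℤ) ≠ 0 := by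
  intro hz
  have h1 : a * m.1 + m.2 = 0 := congrArg Prod.fst hz
  have h2 : -m.1 = 0 := congrArg Prod.snd hz
  have hm1 : m.1 = 0 := by omega
  rw [hm1] at h1
  simp only [mul_zero, zero_add] at h1
  exact hm (Prod.ext_iff.mpr ⟨hm1, h1⟩)

lemma fwd_inj {a : ℤ} :
    Function.Injective (fun m : ℤ × ℤ => ((a * m.1 + m.2, -m.1) : ℤ × ℤ)) := by
  rintro ⟨x, y⟩ ⟨x', y'⟩ h
  simp only [Prod.mk.injEq] at h ⊢
  obtain ⟨h1, h2⟩ := h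
  have hx : x = x' := by omega
  subst hx
  constructor
  · rfl
  · omega

lemma step_eq {p q a : ℤ} (hp : 0 < p) (hpq : p < q) (hp'pos : 0 < a*p - q)
    (hp'lt : a*p - q < p) :
    Irr p q = insert ((0:ℤ),(1:ℤ))
      ((fun m : ℤ × ℤ => ((a * m.1 + m.2, -m.1) : ℤ × ℤ)) '' Irr (a*p - q) p) := by
  have hq : 0 < q := hp.trans hpq
  ext g
  constructor
  · rintro ⟨hgS, hg0, hirr⟩
    by_cases hg01 : g = ((0:ℤ),(1:ℤ))
    · exact hg01 ▸ Set.mem_insert _ _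
    right
    have hg2 : g.2 ≤ 0 := by
      by_contra hpos
      push_neg at hpos
      have hg2' : 1 ≤ g.2 := hpos
      have hq2 : q * 1 ≤ q * g.2 := by nlinarith
      have hp1 : 0 ≤ p * g.1 := by nlinarith [hgS.1]
      have hrest : (g.1, g.2 - 1) ∈ SS p q := mk_mem_SS hgS.1 (by nlinarith [hgS.2])
      have hrest0 : ((g.1, g.2 - 1) : ℤ × ℤ) ≠ 0 := by
        intro hz
        have hz1 : g.1 = 0 := congrArg Prod.fst hz
        have hz2 : g.2 - 1 = 0 := congrArg Prod.snd hz
        exact hg01 (Prod.ext_iff.mpr ⟨hz1, by omega⟩)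
      refine hirr ((0:ℤ),(1:ℤ)) (g.1, g.2 - 1) (zero_one_mem_SS hq) hrest
        (ne_zero_right one_ne_zero) hrest0 ?_
      rw [eq_add_iff]; constructor <;> simp
    refine ⟨(-g.2, g.1 + a * g.2), ⟨bwd_mem hgS hg2, ?_, ?_⟩, ?_⟩
    · intro hz
      have h1 : -g.2 = 0 := congrArg Prod.fst hz
      have h2 : g.1 + a * g.2 = 0 := congrArg Prod.snd hz
      have hg2' : g.2 = 0 := by omega
      rw [hg2'] at h2
      simp only [mul_zero, add_zero] at h2
      exact hg0 (Prod.ext_iff.mpr ⟨h2, hg2'⟩)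
    · rintro u v hu hv hu0 hv0 h
      rw [eq_add_iff] at h
      simp only at h
      obtain ⟨e1, e2⟩ := h
      have hgsum : g = (a*u.1 + u.2, -u.1) + (a*v.1 + v.2, -v.1) := by
        rw [eq_add_iff]
        constructor
        · show g.1 = (a*u.1 + u.2) + (a*v.1 + v.2)
          linear_combination e2 + a * e1
        · show g.2 = -u.1 + -v.1
          linear_combination -e1
      exact hirr _ _ (fwd_mem hp hq hu) (fwd_mem hp hq hv)
        (fwd_ne_zero hu0) (fwd_ne_zero hv0) hgsum
    · show (a * (-g.2) + (g.1 + a * g.2), -(-g.2)) = g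
      rw [Prod.ext_iff]
      constructor
      · show a * (-g.2) + (g.1 + a * g.2) = g.1; ring
      · show -(-g.2) = g.2; ring
  · intro hg
    rcases hg with hg | ⟨m, hm, rfl⟩
    · exact hg ▸ zero_one_mem_Irr hq
    obtain ⟨hmS, hm0, hirr⟩ := hm
    refine ⟨fwd_mem hp hq hmS, fwd_ne_zero hm0, ?_⟩
    rintro u v hu hv hu0 hv0 h
    have h2 : ((a * m.1 + m.2, -m.1) : ℤ × ℤ).2 ≤ 0 := by
      show -m.1 ≤ 0; have := hmS.1; omega
    obtain ⟨u', v', hu', hv', hu'2, hv'2, hu'0, hv'0, hsum⟩ :=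
      redux hp hpq h2 hu hv hu0 hv0 h
    rw [eq_add_iff] at hsum
    simp only at hsum
    obtain ⟨e1, e2⟩ := hsum
    have hmsum : m = (-u'.2, u'.1 + a * u'.2) + (-v'.2, v'.1 + a * v'.2) := by
      rw [eq_add_iff]
      constructor
      · show m.1 = -u'.2 + -v'.2
        linear_combination -e2
      · show m.2 = (u'.1 + a * u'.2) + (v'.1 + a * v'.2)
        linear_combination e1 + a * e2
    refine hirr _ _ (bwd_mem hu' hu'2) (bwd_mem hv' hv'2) ?_ ?_ hmsum
    · intro hz
      have hz1 : -u'.2 = 0 := congrArg Prod.fst hz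
      have hz2 : u'.1 + a * u'.2 = 0 := congrArg Prod.snd hz
      have h3 : u'.2 = 0 := by omega
      rw [h3] at hz2
      simp only [mul_zero, add_zero] at hz2
      exact hu'0 (Prod.ext_iff.mpr ⟨hz2, h3⟩)
    · intro hz
      have hz1 : -v'.2 = 0 := congrArg Prod.fst hz
      have hz2 : v'.1 + a * v'.2 = 0 := congrArg Prod.snd hz
      have h3 : v'.2 = 0 := by omega
      rw [h3] at hz2
      simp only [mul_zero, add_zero] at hz2
      exact hv'0 (Prod.ext_iff.mpr ⟨hz2, h3⟩)

lemma base_eq {q : ℤ} (hq : 2 ≤ q) :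
    Irr 1 q = {((0:ℤ),(1:ℤ)), ((1:ℤ),(0:ℤ)), (q, -1)} := by
  have hq0 : 0 < q := by omega
  ext m
  constructor
  · rintro ⟨⟨h1, h2⟩, hm0, hirr⟩
    simp only [one_mul] at h2
    by_contra hns
    simp only [Set.mem_insert_iff, Set.mem_singleton_iff] at hns
    push_neg at hns
    obtain ⟨hne1, hne2, hne3⟩ := hns
    simp only [ne_eq, Prod.ext_iff, not_and] at hne1 hne2 hne3
    simp only [ne_eq, eq_zero_iff] at hm0
    rcases lt_trichotomy m.2 0 with hm2 | hm2 | hm2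
    · have hm2' : m.2 ≤ -1 := by omega
      have hqm : q ≤ q * (-m.2) := by nlinarith
      have hm1 : q ≤ m.1 := by nlinarith
      refine hirr (q, -1) (m.1 - q, m.2 + 1)
        (mk_mem_SS (by omega) (by linarith [show (1:ℤ) * q + q * (-1) = 0 from by ring]))
        (mk_mem_SS (by omega) (by linarith [show (1:ℤ)*(m.1-q) + q*(m.2+1) = m.1 + q*m.2 from by ring])) (ne_zero_left (by omega)) ?_ ?_
      · intro hz
        have hz1 : m.1 - q = 0 := congrArg Prod.fst hz
        have hz2 : m.2 + 1 = 0 := congrArg Prod.snd hz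
        exact hne3 (by omega) (by omega)
      · rw [eq_add_iff]; constructor <;> simp <;> omega
    · have hm1 : 1 ≤ m.1 := by omega
      have hm1' : 2 ≤ m.1 := by
        rcases lt_or_eq_of_le hm1 with h | h
        · omega
        · exact absurd (hne2 h.symm) (by simp [hm2])
      refine hirr (1, 0) (m.1 - 1, m.2)
        (mk_mem_SS one_pos.le (by norm_num))
        (mk_mem_SS (by omega) (by rw [hm2]; simp only [one_mul, mul_zero, add_zero]; omega))
        (ne_zero_left one_ne_zero) (ne_zero_left (by omega)) ?_
      rw [eq_add_iff]; constructor <;> simp <;> omega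
    · have hm2' : 1 ≤ m.2 := hm2
      have hq2 : q ≤ q * m.2 := by nlinarith
      refine hirr ((0:ℤ),(1:ℤ)) (m.1, m.2 - 1)
        (zero_one_mem_SS hq0)
        (mk_mem_SS h1 (by simp only [one_mul]; nlinarith))
        (ne_zero_right one_ne_zero) ?_ ?_
      · intro hz
        have hz1 : m.1 = 0 := congrArg Prod.fst hz
        have hz2 : m.2 - 1 = 0 := congrArg Prod.snd hz
        exact hne1 (by omega) (by omega)
      · rw [eq_add_iff]; constructor <;> simp
  · intro hm
    simp only [Set.mem_insert_iff, Set.mem_singleton_iff] at hm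
    have key : ∀ x y : ℤ × ℤ, x ∈ SS 1 q → y ∈ SS 1 q → x.1 + y.1 = q →
        x.2 + y.2 = -1 → x.2 ≤ -1 → y ≠ 0 → False := by
      rintro x y ⟨hx1, hx2⟩ ⟨hy1, hy2⟩ f1 f2 hx2' hy0
      simp only [one_mul] at hx2 hy2
      have hqx : q ≤ q * (-x.2) := by nlinarith
      have hxq : q ≤ x.1 := by nlinarith
      have hyz : y.1 = 0 := by omega
      have hy2' : 0 ≤ y.2 := by nlinarith
      simp only [ne_eq, eq_zero_iff] at hy0
      have hy1' : 1 ≤ y.2 := by omega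
      have hx2'' : x.2 ≤ -2 := by omega
      have h2q : 2 * q ≤ q * (-x.2) := by nlinarith
      have e : q * -x.2 = -(q * x.2) := by ring
      omega
    rcases hm with rfl | rfl | rfl
    · exact zero_one_mem_Irr hq0
    · refine ⟨mk_mem_SS one_pos.le (by norm_num), ne_zero_left one_ne_zero, ?_⟩
      rintro u v ⟨hu1, hu2⟩ ⟨hv1, hv2⟩ hu0 hv0 h
      rw [eq_add_iff] at h
      simp only at h
      obtain ⟨e1, e2⟩ := h
      simp only [one_mul] at hu2 hv2
      simp only [ne_eq, eq_zero_iff] at hu0 hv0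
      rcases (by omega : u.1 = 0 ∧ v.1 = 1 ∨ u.1 = 1 ∧ v.1 = 0) with ⟨ha, hb⟩ | ⟨ha, hb⟩
      · have hu2' : 0 ≤ u.2 := by nlinarith
        have h1 : 1 ≤ u.2 := by omega
        have hv2'' : v.2 ≤ -1 := by omega
        have : q * v.2 ≤ -q := by nlinarith
        omega
      · have hv2' : 0 ≤ v.2 := by nlinarith
        have h1 : 1 ≤ v.2 := by omega
        have hu2'' : u.2 ≤ -1 := by omega
        have : q * u.2 ≤ -q := by nlinarith
        omega
    · refine ⟨mk_mem_SS (by omega) (by linarith [show (1:ℤ) * q + q * (-1) = 0 from by ring]), ne_zero_left (by omega), ?_⟩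
      rintro u v ⟨hu1, hu2⟩ ⟨hv1, hv2⟩ hu0 hv0 h
      rw [eq_add_iff] at h
      simp only at h
      obtain ⟨e1, e2⟩ := h
      rcases (by omega : u.2 ≤ -1 ∨ v.2 ≤ -1) with hcase | hcase
      · exact key u v ⟨hu1, hu2⟩ ⟨hv1, hv2⟩ (by omega) (by omega) hcase hv0
      · exact key v u ⟨hv1, hv2⟩ ⟨hu1, hu2⟩ (by omega) (by omega) hcase hu0


lemma irr_card : ∀ (c : List ℤ) (p q : ℤ), 0 < p → p < q → IsCoprime p q →
    (∀ a ∈ c, 2 ≤ a) → hjVal c = (q : ℚ) / (p : ℚ) →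
    (Irr p q).Finite ∧ (Irr p q).ncard = c.length + 2 := by
  intro c
  induction c with
  | nil =>
    intro p q hp hpq hcop hc hval
    exfalso
    have h0 : (0 : ℚ) = (q : ℚ) / (p : ℚ) := hval
    have hp0 : (p : ℚ) ≠ 0 := by exact_mod_cast hp.ne'
    have hq0 : (q : ℚ) ≠ 0 := by
      have : (0:ℤ) < q := hp.trans hpq
      exact_mod_cast this.ne'
    exact hq0 (by field_simp at h0; simpa using h0.symm)
  | cons a c' ih =>
    intro p q hp hpq hcop hc hval
    rcases c' with _ | ⟨b, c''⟩
    · -- base case : c = [a], p = 1, q = a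
      have hp0 : (p : ℚ) ≠ 0 := by exact_mod_cast hp.ne'
      have hval' : (a : ℚ) = (q : ℚ) / (p : ℚ) := hval
      rw [eq_div_iff hp0] at hval'
      have hq_eq : a * p = q := by exact_mod_cast hval'
      have hdvd : p ∣ q := ⟨a, by linarith [hq_eq]⟩
      have hunit : IsUnit p := hcop.isUnit_of_dvd' dvd_rfl hdvd
      have hp1 : p = 1 := by
        rcases Int.isUnit_iff.mp hunit with h | h
        · exact h
        · omega
      have ha2 : 2 ≤ a := hc a (by simp)
      subst hp1
      have hqa : q = a := by omega
      have hq2 : 2 ≤ q := by omega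
      rw [base_eq hq2]
      have hne12 : ((0:ℤ),(1:ℤ)) ≠ ((1:ℤ),(0:ℤ)) := by decide
      have hne13 : ((0:ℤ),(1:ℤ)) ≠ ((q:ℤ),(-1:ℤ)) := by
        intro h; have := congrArg Prod.fst h; simp at this; omega
      have hne23 : ((1:ℤ),(0:ℤ)) ≠ ((q:ℤ),(-1:ℤ)) := by
        intro h; have := congrArg Prod.snd h; simp at this
      constructor
      · exact (Set.finite_singleton _).insert _ |>.insert _
      · rw [Set.ncard_insert_of_notMem (by simp [hne12, hne13]) (Set.toFinite _),
          Set.ncard_insert_of_notMem (by simp [hne23]) (Set.toFinite _),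
          Set.ncard_singleton]
        simp
    · -- inductive step
      have hq : 0 < q := hp.trans hpq
      set r := hjVal (b :: c'') with hr
      have hr1 : 1 < r := hjVal_gt_one _ (by simp) (fun x hx => hc x (by simp at hx ⊢; tauto))
      have hr0 : r ≠ 0 := by linarith
      have hp0 : (p : ℚ) ≠ 0 := by exact_mod_cast hp.ne'
      have hppos : (0:ℚ) < (p:ℚ) := by exact_mod_cast hp
      have hvala : (a : ℚ) - 1 / r = (q : ℚ) / (p : ℚ) := hval
      have hp'Q : ((a * p - q : ℤ) : ℚ) = (p : ℚ) / r := by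
        push_cast
        have h1 : 1 / r = (a : ℚ) - (q : ℚ) / (p : ℚ) := by linarith
        field_simp
        field_simp at h1
        linarith
      have hp'pos : 0 < a * p - q := by
        have h2 : (0 : ℚ) < (p : ℚ) / r := by positivity
        rw [← hp'Q] at h2
        exact_mod_cast h2
      have hp'lt : a * p - q < p := by
        have hplt : (p : ℚ) / r < (p : ℚ) := by
          rw [div_lt_iff₀ (by linarith : (0:ℚ) < r)]
          nlinarith
        rw [← hp'Q] at hplt
        exact_mod_cast hplt
      have hcop' : IsCoprime (a * p - q) p := by
        have h1 : IsCoprime p (-q + p * a) := hcop.neg_right.add_mul_left_right a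
        have h2 : a * p - q = -q + p * a := by ring
        rw [h2]; exact h1.symm
      have hval' : hjVal (b :: c'') = (p : ℚ) / ((a * p - q : ℤ) : ℚ) := by
        rw [hp'Q, ← hr]
        field_simp
      obtain ⟨hfin, hcard⟩ := ih (a * p - q) p hp'pos hp'lt hcop'
        (fun x hx => hc x (by simp at hx ⊢; tauto)) hval'
      rw [step_eq hp hpq hp'pos hp'lt]
      have hnot : ((0:ℤ),(1:ℤ)) ∉
          (fun m : ℤ × ℤ => ((a * m.1 + m.2, -m.1) : ℤ × ℤ)) '' Irr (a*p - q) p := by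
        rintro ⟨m, hm, heq⟩
        have h2 : -m.1 = 1 := congrArg Prod.snd heq
        have h3 := hm.1.1
        omega
      refine ⟨(hfin.image _).insert _, ?_⟩
      rw [Set.ncard_insert_of_notMem hnot (hfin.image _),
        Set.ncard_image_of_injective _ fwd_inj, hcard]
      simp only [List.length_cons]
      try omega

end HJaux


/-- For `0 < p < q` coprime, `σ` the cone generated by `(1,0)` and `(p,q)`, and
`(c₁,…,c_t)` the Hirzebruch–Jung expansion of `q/p`, the minimal generating set of
the semigroup `σ̌ ∩ ℤ²` has exactly `t + 2` elements. Here `σ̌ ∩ ℤ²` is the set of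
lattice points `m` with `m₁ ≥ 0` and `p·m₁ + q·m₂ ≥ 0`. -/
theorem hilbert_basis_card (p q : ℤ) (hp : 0 < p) (hpq : p < q)
    (hcop : IsCoprime p q)
    (c : List ℤ) (hc : ∀ a ∈ c, 2 ≤ a)
    (hval : hjVal c = (q : ℚ) / (p : ℚ))
    (S : Set (ℤ × ℤ))
    (hS : S = {m : ℤ × ℤ | 0 ≤ m.1 ∧ 0 ≤ p * m.1 + q * m.2})
    (G : Finset (ℤ × ℤ))
    (hGS : (G : Set (ℤ × ℤ)) ⊆ S)
    (hgen : ∀ m ∈ S, genBy G m)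
    (hmin : ∀ G' : Finset (ℤ × ℤ), G' ⊂ G → ∃ m ∈ S, ¬ genBy G' m) :
    G.card = c.length + 2 := by

  have hq : 0 < q := hp.trans hpq
  have hSS : S = HJaux.SS p q := hS
  rw [hSS] at hGS hgen hmin
  have hGI : (G : Set (ℤ × ℤ)) = HJaux.Irr p q := HJaux.G_eq_Irr hp hq hGS hgen hmin
  have h1 : G.card = ((G : Set (ℤ × ℤ))).ncard := (Set.ncard_coe_finset G).symm
  rw [h1, hGI]
  exact (HJaux.irr_card c p q hp hpq hcop hc hval).2
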